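/- For all graphs G, adim(G) ≤ (Δ'(G)+1)·bdim(G), where Δ'(G) is the maximum over vertices v and positive integers j of the number of vertices at distance exactly j from v. -/

import Mathlib

open SimpleGraph Finset

variable {V : Type*}

/-- truncated distance `d_k(x,y) = min(d(x,y), k+1)` with `d = ∞` across components. -/
noncomputable def truncDist (G : SimpleGraph V) (k : ℕ) (x y : V) : ℕ∞ :=
  min (G.edist x y) (k + 1)

/-- `f` is a resolving broadcast of `G`. -/
def IsResolvingBroadcast (G : SimpleGraph V) (f : V → ℕ) : Prop :=
  ∀ x y : V, x ≠ y → ∃ z : V, 0 < f z ∧ truncDist G (f z) x z ≠ truncDist G (f z) y z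

/-- broadcast dimension -/
noncomputable def bdim (G : SimpleGraph V) [Fintype V] : ℕ :=
  sInf {c : ℕ | ∃ f : V → ℕ, IsResolvingBroadcast G f ∧ ∑ v, f v = c}

/-- adjacency resolving set -/
def IsAdjResolvingSet (G : SimpleGraph V) (S : Set V) : Prop :=
  ∀ x y : V, x ≠ y → ∃ z ∈ S, truncDist G 1 x z ≠ truncDist G 1 y z

/-- adjacency dimension -/
noncomputable def adim (G : SimpleGraph V) [Fintype V] : ℕ :=
  sInf {n : ℕ | ∃ S : Finset V, IsAdjResolvingSet G ↑S ∧ S.card = n}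

/-- resolving set (metric dimension) -/
def IsResolvingSet (G : SimpleGraph V) (S : Set V) : Prop :=
  ∀ x y : V, x ≠ y → ∃ z ∈ S, G.edist x z ≠ G.edist y z

/-- metric dimension -/
noncomputable def mdim (G : SimpleGraph V) [Fintype V] : ℕ :=
  sInf {n : ℕ | ∃ S : Finset V, IsResolvingSet G ↑S ∧ S.card = n}

/-- `Δ'(G)`: the maximum, over vertices `v` and positive integers `j`, of the
number of vertices at distance exactly `j` from `v`. -/
noncomputable def maxLevelSize {V : Type*} [Fintype V] (G : SimpleGraph V) : ℕ :=
  sSup {t : ℕ | ∃ (v : V) (j : ℕ), 0 < j ∧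
    t = Fintype.card {u : V // G.edist u v = j}}


lemma level_card_le_aux {V : Type*} [Fintype V] (G : SimpleGraph V) (z : V) (j : ℕ)
    (hj : 0 < j) :
    Fintype.card {u : V // G.edist u z = (j : ℕ∞)} ≤ maxLevelSize G := by
  have hmem : Fintype.card {u : V // G.edist u z = (j : ℕ∞)} ∈
      {t : ℕ | ∃ (v : V) (j : ℕ), 0 < j ∧
        t = Fintype.card {u : V // G.edist u v = j}} := ⟨z, j, hj, rfl⟩
  have hbdd : BddAbove {t : ℕ | ∃ (v : V) (j : ℕ), 0 < j ∧
      t = Fintype.card {u : V // G.edist u v = j}} := by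
    refine ⟨Fintype.card V, ?_⟩
    rintro t ⟨v, j, hj, rfl⟩
    exact Fintype.card_subtype_le _
  exact le_csSup hbdd hmem

lemma level_card_le_aux' {V : Type*} [Fintype V] (G : SimpleGraph V) (z : V) (j : ℕ)
    (hj : 0 < j) [DecidablePred fun u => G.edist u z = (j : ℕ∞)] :
    (Finset.univ.filter (fun u => G.edist u z = (j : ℕ∞))).card ≤ maxLevelSize G := by
  have h := level_card_le_aux G z j hj
  rw [Fintype.card_subtype] at h
  refine le_trans (le_of_eq ?_) h
  congr 1

lemma ball_card_le_aux {V : Type*} [Fintype V] [DecidableEq V] (G : SimpleGraph V)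
    (z : V) (k : ℕ) [DecidablePred fun u => G.edist u z ≤ (k : ℕ∞)] :
    (Finset.univ.filter (fun u => G.edist u z ≤ (k : ℕ∞))).card ≤ 1 + k * maxLevelSize G := by
  classical
  have hsub : Finset.univ.filter (fun u => G.edist u z ≤ (k : ℕ∞)) ⊆
      (Finset.range (k+1)).biUnion
        (fun j => Finset.univ.filter (fun u => G.edist u z = (j : ℕ∞))) := by
    intro u hu
    simp only [mem_filter, mem_univ, true_and] at hu
    have hne : G.edist u z ≠ ⊤ := ne_top_of_le_ne_top (WithTop.coe_ne_top) hu
    lift G.edist u z to ℕ using hne with m hm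
    have hmk : m ≤ k := by exact_mod_cast hu
    simp only [Finset.mem_biUnion, Finset.mem_range, mem_filter, mem_univ, true_and]
    refine ⟨m, Nat.lt_succ_of_le hmk, ?_⟩
    first | exact hm | exact hm.symm
  calc (Finset.univ.filter (fun u => G.edist u z ≤ (k : ℕ∞))).card
      ≤ ((Finset.range (k+1)).biUnion
        (fun j => Finset.univ.filter (fun u => G.edist u z = (j : ℕ∞)))).card :=
        Finset.card_le_card hsub
    _ ≤ ∑ j ∈ Finset.range (k+1),
        (Finset.univ.filter (fun u => G.edist u z = (j : ℕ∞))).card :=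
        Finset.card_biUnion_le
    _ = (∑ j ∈ Finset.range k,
        (Finset.univ.filter (fun u => G.edist u z = ((j+1 : ℕ) : ℕ∞))).card) +
        (Finset.univ.filter (fun u => G.edist u z = ((0 : ℕ) : ℕ∞))).card :=
        Finset.sum_range_succ' _ _
    _ ≤ (∑ _j ∈ Finset.range k, maxLevelSize G) + 1 := by
        gcongr with j hj
        · exact level_card_le_aux' G z (j+1) (Nat.succ_pos j)
        · rw [Finset.card_le_one]
          intro a ha b hb
          simp only [mem_filter, mem_univ, true_and, Nat.cast_zero,
            SimpleGraph.edist_eq_zero_iff] at ha hb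
          rw [ha, hb]
    _ = k * maxLevelSize G + 1 := by rw [Finset.sum_const, Finset.card_range, smul_eq_mul]
    _ = 1 + k * maxLevelSize G := by ring

theorem stmt_18 {V : Type*} [Fintype V] [DecidableEq V] (G : SimpleGraph V) :
    adim G ≤ (maxLevelSize G + 1) * bdim G := by
  classical
  -- the set defining bdim is nonempty
  have hone : IsResolvingBroadcast G (fun _ => 1) := by
    intro x y hxy
    refine ⟨x, one_pos, ?_⟩
    have h1 : truncDist G 1 x x = 0 := by
      simp [truncDist, SimpleGraph.edist_self]
    have h2 : 0 < truncDist G 1 y x := by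
      apply lt_min
      · exact pos_iff_ne_zero.mpr
          (fun h => hxy (SimpleGraph.edist_eq_zero_iff.mp h).symm)
      · norm_num
    rw [h1]
    exact h2.ne
  have hne : {c : ℕ | ∃ f : V → ℕ, IsResolvingBroadcast G f ∧ ∑ v, f v = c}.Nonempty :=
    ⟨∑ _v : V, 1, fun _ => 1, hone, rfl⟩
  obtain ⟨f, hf, hsum⟩ : ∃ f : V → ℕ, IsResolvingBroadcast G f ∧ ∑ v, f v = bdim G :=
    Nat.sInf_mem hne
  set S : Finset V :=
    Finset.univ.filter (fun u => ∃ z : V, 0 < f z ∧ G.edist u z ≤ (f z : ℕ∞)) with hS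
  -- S is an adjacency resolving set
  have hres : IsAdjResolvingSet G ↑S := by
    intro x y hxy
    obtain ⟨z, hz, hzne⟩ := hf x y hxy
    have key : G.edist x z ≤ (f z : ℕ∞) ∨ G.edist y z ≤ (f z : ℕ∞) := by
      by_contra h
      push_neg at h
      obtain ⟨h1, h2⟩ := h
      apply hzne
      have e1 : truncDist G (f z) x z = (f z : ℕ∞) + 1 := by
        apply min_eq_right
        exact Order.add_one_le_of_lt h1
      have e2 : truncDist G (f z) y z = (f z : ℕ∞) + 1 := by
        apply min_eq_right
        exact Order.add_one_le_of_lt h2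
      rw [e1, e2]
    have sep : ∀ a b : V, a ≠ b → truncDist G 1 a a ≠ truncDist G 1 b a := by
      intro a b hab
      have h1 : truncDist G 1 a a = 0 := by
        simp [truncDist, SimpleGraph.edist_self]
      have h2 : 0 < truncDist G 1 b a := by
        apply lt_min
        · exact pos_iff_ne_zero.mpr
            (fun h => hab (SimpleGraph.edist_eq_zero_iff.mp h).symm)
        · norm_num
      rw [h1]
      exact h2.ne
    rcases key with hx | hy
    · refine ⟨x, ?_, sep x y hxy⟩
      simp only [hS, Finset.coe_filter, Set.mem_setOf_eq, Finset.mem_univ, true_and]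
      exact ⟨z, hz, hx⟩
    · refine ⟨y, ?_, fun h => sep y x hxy.symm h.symm⟩
      simp only [hS, Finset.coe_filter, Set.mem_setOf_eq, Finset.mem_univ, true_and]
      exact ⟨z, hz, hy⟩
  -- cardinality bound
  have hcard : S.card ≤ (maxLevelSize G + 1) * bdim G := by
    have hsub : S ⊆ (Finset.univ.filter (fun z => 0 < f z)).biUnion
        (fun z => Finset.univ.filter (fun u => G.edist u z ≤ (f z : ℕ∞))) := by
      intro u hu
      simp only [hS, mem_filter, mem_univ, true_and] at hu
      obtain ⟨z, hz, hle⟩ := hu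
      simp only [Finset.mem_biUnion, mem_filter, mem_univ, true_and]
      exact ⟨z, hz, hle⟩
    calc S.card ≤ ∑ z ∈ Finset.univ.filter (fun z => 0 < f z),
          (Finset.univ.filter (fun u => G.edist u z ≤ (f z : ℕ∞))).card :=
        le_trans (Finset.card_le_card hsub) Finset.card_biUnion_le
      _ ≤ ∑ z ∈ Finset.univ.filter (fun z => 0 < f z), (maxLevelSize G + 1) * f z := by
          apply Finset.sum_le_sum
          intro z hz
          simp only [mem_filter, mem_univ, true_and] at hz
          calc (Finset.univ.filter (fun u => G.edist u z ≤ (f z : ℕ∞))).card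
              ≤ 1 + f z * maxLevelSize G := ball_card_le_aux G z (f z)
            _ ≤ (maxLevelSize G + 1) * f z := by nlinarith
      _ ≤ ∑ z : V, (maxLevelSize G + 1) * f z :=
          Finset.sum_le_sum_of_subset (Finset.filter_subset _ _)
      _ = (maxLevelSize G + 1) * ∑ z : V, f z := by rw [Finset.mul_sum]
      _ = (maxLevelSize G + 1) * bdim G := by rw [hsum]
  have hadim : adim G ≤ S.card := Nat.sInf_le ⟨S, hres, rfl⟩
  exact le_trans hadim hcard
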